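/- (Mean-zero lemma) Let G = (V,E) be a D-regular simple graph on V = Fin N with D ≥ 1, and fix arbitrary orientations and orderings of the gates in the 2-round iHVA |φ(θ)⟩ = U_YZ(θ₂)·U_ZY(θ₁)·|+⟩^{⊗N}. Then for every edge (i,j) ∈ E, the mean over the uniformly random parameters θ of the expectation value ⟨φ(θ)| Z_iZ_j |φ(θ)⟩ is zero: E_θ[⟨φ(θ)| Z_iZ_j |φ(θ)⟩] = 0. -/

import Mathlib

open Matrix

noncomputable section

/-- An `N`-qubit state: a vector in `ℂ^({0,1}^N)` indexed by bit strings. -/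
abbrev QState (N : ℕ) := (Fin N → Fin 2) → ℂ

/-- An `N`-qubit operator: a `2^N × 2^N` complex matrix indexed by bit strings. -/
abbrev QOp (N : ℕ) := Matrix (Fin N → Fin 2) (Fin N → Fin 2) ℂ

def PauliX : Matrix (Fin 2) (Fin 2) ℂ := !![0, 1; 1, 0]
def PauliY : Matrix (Fin 2) (Fin 2) ℂ := !![0, -Complex.I; Complex.I, 0]
def PauliZ : Matrix (Fin 2) (Fin 2) ℂ := !![1, 0; 0, -1]

/-- The Kronecker (tensor) product `⊗ₖ P k` of one `2 × 2` matrix per qubit. -/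
def pauliString {N : ℕ} (P : Fin N → Matrix (Fin 2) (Fin 2) ℂ) : QOp N :=
  fun x y => ∏ k, P k (x k) (y k)

/-- The operator acting as `A` on qubit `i`, `B` on qubit `j` and identity elsewhere. -/
def twoQubitOp {N : ℕ} (A B : Matrix (Fin 2) (Fin 2) ℂ) (i j : Fin N) : QOp N :=
  pauliString (fun k => if k = i then A else if k = j then B else 1)

/-- Computational basis vector `|x⟩`. -/
def ket {N : ℕ} (x : Fin N → Fin 2) : QState N := fun y => if y = x then 1 else 0

/-- `|+⟩^{⊗N}`, the uniform vector with all coordinates `2^{-N/2}`. -/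
def plusN (N : ℕ) : QState N := fun _ => (((Real.sqrt 2)⁻¹ : ℝ) : ℂ) ^ N

/-- Expectation value `⟨ψ| A |ψ⟩`. -/
def expval {N : ℕ} (ψ : QState N) (A : QOp N) : ℂ :=
  ∑ x, (starRingEnd ℂ) (ψ x) * (A *ᵥ ψ) x

/-- The set of edges of `G`, each listed once as an ordered pair `(i,j)` with `i < j`. -/
def edgePairs {N : ℕ} (G : SimpleGraph (Fin N)) [DecidableRel G.Adj] :
    Finset (Fin N × Fin N) :=
  Finset.univ.filter (fun p : Fin N × Fin N => p.1 < p.2 ∧ G.Adj p.1 p.2)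

/-- The cut size `C(x)`: the number of edges `(i,j)` of `G` with `x i ≠ x j`. -/
def cutSize {N : ℕ} (G : SimpleGraph (Fin N)) [DecidableRel G.Adj] (x : Fin N → Fin 2) : ℕ :=
  ((edgePairs G).filter (fun p => x p.1 ≠ x p.2)).card

/-- The MaxCut Hamiltonian `H_MC = ∑_{(i,j) ∈ E} Z_i Z_j`. -/
def HMC {N : ℕ} (G : SimpleGraph (Fin N)) [DecidableRel G.Adj] : QOp N :=
  ∑ p ∈ edgePairs G, twoQubitOp PauliZ PauliZ p.1 p.2

/-- The cut-counting observable `Ĉ = (1/2) ∑_{(i,j) ∈ E} (1 - Z_i Z_j)`. -/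
def Chat {N : ℕ} (G : SimpleGraph (Fin N)) [DecidableRel G.Adj] : QOp N :=
  (1/2 : ℂ) • ∑ p ∈ edgePairs G, ((1 : QOp N) - twoQubitOp PauliZ PauliZ p.1 p.2)

/-- The gate `e^{-iθ Z_i Y_j / 2}`. -/
def gateZY {N : ℕ} (θ : ℝ) (i j : Fin N) : QOp N :=
  NormedSpace.exp ((-Complex.I * ((θ : ℂ) / 2)) • twoQubitOp PauliZ PauliY i j)

/-- The gate `e^{-iθ Y_i Z_j / 2}`. -/
def gateYZ {N : ℕ} (θ : ℝ) (i j : Fin N) : QOp N :=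
  NormedSpace.exp ((-Complex.I * ((θ : ℂ) / 2)) • twoQubitOp PauliY PauliZ i j)

end

open MeasureTheory in
/-- The distribution of independent parameters each uniform on `[0, 2π)`:
the product over `P` of the normalized Lebesgue measure on `[0, 2π]`. -/
noncomputable def uniformAngles (P : Type*) [Fintype P] : Measure (P → ℝ) :=
  Measure.pi fun _ =>
    (ENNReal.ofReal (2 * Real.pi))⁻¹ • volume.restrict (Set.Icc 0 (2 * Real.pi))

/-- Apply, in the order of the list `L` of edges, the gates
`exp(−(i·angle e/2) · A_i B_j)` where `(i,j) = orient e` is the fixed orientation of `e`. -/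
noncomputable def roundApply {N : ℕ} (A B : Matrix (Fin 2) (Fin 2) ℂ)
    (orient : Sym2 (Fin N) → Fin N × Fin N) (angle : Sym2 (Fin N) → ℝ)
    (L : List (Sym2 (Fin N))) (ψ : QState N) : QState N :=
  L.foldl (fun φ e =>
    NormedSpace.exp ((-Complex.I * ((angle e : ℂ) / 2)) •
      twoQubitOp A B (orient e).1 (orient e).2) *ᵥ φ) ψ

/-- The two-round iHVA state `|φ(θ)⟩ = U_YZ(θ₂) U_ZY(θ₁) |+⟩^{⊗N}`, with gate orders `L₁`,
`L₂` and one independent parameter `θ (l, e)` per round `l` and edge `e`. -/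
noncomputable def iHVA2 {N : ℕ} (orient : Sym2 (Fin N) → Fin N × Fin N)
    (L₁ L₂ : List (Sym2 (Fin N))) (θ : Fin 2 × Sym2 (Fin N) → ℝ) : QState N :=
  roundApply PauliY PauliZ orient (fun e => θ (1, e)) L₂
    (roundApply PauliZ PauliY orient (fun e => θ (0, e)) L₁ (plusN N))

noncomputable section MeanZeroAux
open Complex

abbrev Xgate {N : ℕ} (j : Fin N) : QOp N :=
  pauliString (fun k => if k = j then PauliX else 1)

lemma pauliString_mul {N : ℕ} (P Q : Fin N → Matrix (Fin 2) (Fin 2) ℂ) :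
    pauliString P * pauliString Q = pauliString (fun k => P k * Q k) := by
  ext x y
  simp only [Matrix.mul_apply, pauliString, ← Finset.prod_mul_distrib]
  rw [← Fintype.piFinset_univ, Finset.prod_univ_sum]

lemma pauliString_one {N : ℕ} : pauliString (fun _ : Fin N => (1 : Matrix (Fin 2) (Fin 2) ℂ)) = 1 := by
  ext x y
  simp only [pauliString, Matrix.one_apply]
  by_cases h : x = y
  · subst h; simp
  · rw [if_neg h]
    obtain ⟨k, hk⟩ := Function.ne_iff.mp h
    exact Finset.prod_eq_zero (Finset.mem_univ k) (by simp [Matrix.one_apply, hk])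

lemma pauliString_neg_at {N : ℕ} (P Q : Fin N → Matrix (Fin 2) (Fin 2) ℂ) (t : Fin N)
    (ht : P t = -Q t) (h : ∀ k ≠ t, P k = Q k) : pauliString P = -pauliString Q := by
  ext x y
  simp only [pauliString, Matrix.neg_apply]
  rw [← Finset.mul_prod_erase Finset.univ _ (Finset.mem_univ t),
      ← Finset.mul_prod_erase Finset.univ (fun k => Q k (x k) (y k)) (Finset.mem_univ t)]
  rw [ht]
  rw [Finset.prod_congr rfl (fun k hk => by rw [h k (Finset.ne_of_mem_erase hk)])]
  simp

end MeanZeroAux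
section MeanZeroAux2
open Complex

lemma PauliX_mul_self : PauliX * PauliX = 1 := by
  ext a b; fin_cases a <;> fin_cases b <;>
    simp [PauliX, Matrix.mul_apply, Fin.sum_univ_two, Matrix.one_apply]

lemma PauliY_mul_self : PauliY * PauliY = 1 := by
  ext a b; fin_cases a <;> fin_cases b <;>
    simp [PauliY, Matrix.mul_apply, Fin.sum_univ_two, Matrix.one_apply, Complex.I_mul_I]

lemma PauliZ_mul_self : PauliZ * PauliZ = 1 := by
  ext a b; fin_cases a <;> fin_cases b <;>
    simp [PauliZ, Matrix.mul_apply, Fin.sum_univ_two, Matrix.one_apply]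

lemma PauliX_anticomm_Y : PauliX * PauliY = -(PauliY * PauliX) := by
  ext a b; fin_cases a <;> fin_cases b <;>
    simp [PauliX, PauliY, Matrix.mul_apply, Fin.sum_univ_two]

lemma PauliX_anticomm_Z : PauliX * PauliZ = -(PauliZ * PauliX) := by
  ext a b; fin_cases a <;> fin_cases b <;>
    simp [PauliX, PauliZ, Matrix.mul_apply, Fin.sum_univ_two]

lemma twoQubitOp_sq {N : ℕ} (A B : Matrix (Fin 2) (Fin 2) ℂ) (hA : A * A = 1) (hB : B * B = 1)
    (p q : Fin N) : twoQubitOp A B p q * twoQubitOp A B p q = 1 := by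
  rw [twoQubitOp, pauliString_mul, ← pauliString_one]
  exact congrArg pauliString (funext fun k => by split_ifs <;> simp [hA, hB])

lemma Xgate_mul_self {N : ℕ} (j : Fin N) : Xgate j * Xgate j = 1 := by
  rw [Xgate, pauliString_mul, ← pauliString_one]
  exact congrArg pauliString (funext fun k => by split_ifs <;> simp [PauliX_mul_self])

lemma Xgate_comm_twoQubitOp {N : ℕ} (j p q : Fin N) (A B : Matrix (Fin 2) (Fin 2) ℂ)
    (hjp : j ≠ p) (hjq : j ≠ q) :
    Xgate j * twoQubitOp A B p q = twoQubitOp A B p q * Xgate j := by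
  rw [Xgate, twoQubitOp, pauliString_mul, pauliString_mul]
  exact congrArg pauliString (funext fun k => by split_ifs <;> simp_all)

lemma Xgate_anticomm_twoQubitOp {N : ℕ} (j p q : Fin N) (A B : Matrix (Fin 2) (Fin 2) ℂ)
    (hA : PauliX * A = -(A * PauliX)) (hB : PauliX * B = -(B * PauliX))
    (hpq : p ≠ q) (hj : j = p ∨ j = q) :
    Xgate j * twoQubitOp A B p q = -(twoQubitOp A B p q * Xgate j) := by
  rw [Xgate, twoQubitOp, pauliString_mul, pauliString_mul]
  rcases hj with hj | hj
  · subst hj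
    refine pauliString_neg_at _ _ j ?_ ?_
    · simp [hpq, hA]
    · intro k hk
      split_ifs <;> simp_all
  · subst hj
    refine pauliString_neg_at _ _ j ?_ ?_
    · simp [Ne.symm hpq, hB]
    · intro k hk
      split_ifs <;> simp_all

end MeanZeroAux2
section MeanZeroAux3
open Complex NormedSpace

variable {n : Type*} [Fintype n] [DecidableEq n]

/-- The algebra homomorphism `ℂ × ℂ →ₐ Matrix` sending `(a, b)` to
`((a+b)/2) • 1 + ((a-b)/2) • P`, for `P` an involution. -/
noncomputable def involHom (P : Matrix n n ℂ) (hP : P * P = 1) :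
    (ℂ × ℂ) →ₐ[ℂ] Matrix n n ℂ where
  toFun z := ((z.1 + z.2) / 2) • (1 : Matrix n n ℂ) + ((z.1 - z.2) / 2) • P
  map_one' := by norm_num
  map_mul' z w := by
    simp only [Prod.fst_mul, Prod.snd_mul, add_mul, mul_add, smul_mul_assoc, mul_smul_comm,
      one_mul, mul_one, hP, smul_smul]
    match_scalars <;> ring
  map_zero' := by simp
  map_add' z w := by
    simp only [Prod.fst_add, Prod.snd_add]
    match_scalars <;> ring
  commutes' r := by
    simp [Algebra.algebraMap_eq_smul_one]

lemma exp_smul_of_sq_eq_one (P : Matrix n n ℂ) (hP : P * P = 1) (c : ℂ) :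
    NormedSpace.exp (c • P) = ((Complex.exp c + Complex.exp (-c)) / 2) • (1 : Matrix n n ℂ)
      + ((Complex.exp c - Complex.exp (-c)) / 2) • P := by
  letI : SeminormedRing (Matrix n n ℂ) := Matrix.linftyOpSemiNormedRing
  letI : NormedRing (Matrix n n ℂ) := Matrix.linftyOpNormedRing
  letI : NormedAlgebra ℂ (Matrix n n ℂ) := Matrix.linftyOpNormedAlgebra
  have hf : Continuous (involHom P hP) := by
    show Continuous fun z : ℂ × ℂ =>
      ((z.1 + z.2) / 2) • (1 : Matrix n n ℂ) + ((z.1 - z.2) / 2) • P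
    fun_prop
  have h1 : (c • P) = involHom P hP (c, -c) := by
    show c • P = ((c + -c) / 2) • (1 : Matrix n n ℂ) + ((c - -c) / 2) • P
    norm_num
  rw [h1]; refine (map_exp (involHom P hP) hf (c, -c)).symm.trans ?_
  have h2 : NormedSpace.exp ((c, -c) : ℂ × ℂ) = (Complex.exp c, Complex.exp (-c)) := by
    ext
    · rw [Prod.fst_exp, Complex.exp_eq_exp_ℂ]
    · rw [Prod.snd_exp, Complex.exp_eq_exp_ℂ]
  rw [h2]
  rfl

end MeanZeroAux3
section MeanZeroAux4
open Complex

lemma Xgate_comm_exp {N : ℕ} (j : Fin N) (P : QOp N) (hP : P * P = 1)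
    (hc : Xgate j * P = P * Xgate j) (c : ℂ) :
    Xgate j * NormedSpace.exp (c • P) = NormedSpace.exp (c • P) * Xgate j := by
  rw [exp_smul_of_sq_eq_one P hP c]
  simp only [mul_add, add_mul, mul_smul_comm, smul_mul_assoc, mul_one, one_mul, hc]

lemma Xgate_anti_exp {N : ℕ} (j : Fin N) (P : QOp N) (hP : P * P = 1)
    (hc : Xgate j * P = -(P * Xgate j)) (θ : ℝ) :
    NormedSpace.exp ((-Complex.I * (((2 * Real.pi - θ : ℝ) : ℂ) / 2)) • P) * Xgate j
      = -(Xgate j * NormedSpace.exp ((-Complex.I * ((θ : ℂ) / 2)) • P)) := by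
  set c : ℂ := -Complex.I * ((θ : ℂ) / 2) with hcdef
  have hm : Complex.exp (-(Real.pi * Complex.I)) = -1 := by
    rw [Complex.exp_neg, Complex.exp_pi_mul_I]; norm_num
  have h1 : Complex.exp (-Complex.I * (((2 * Real.pi - θ : ℝ) : ℂ) / 2)) = -Complex.exp (-c) := by
    have h : -Complex.I * (((2 * Real.pi - θ : ℝ) : ℂ) / 2) = -(Real.pi * Complex.I) + -c := by
      rw [hcdef]; push_cast; ring
    rw [h, Complex.exp_add, hm]; ring
  have h2 : Complex.exp (-(-Complex.I * (((2 * Real.pi - θ : ℝ) : ℂ) / 2))) = -Complex.exp c := by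
    have h : -(-Complex.I * (((2 * Real.pi - θ : ℝ) : ℂ) / 2)) = Real.pi * Complex.I + c := by
      rw [hcdef]; push_cast; ring
    rw [h, Complex.exp_add, Complex.exp_pi_mul_I]; ring
  rw [exp_smul_of_sq_eq_one P hP, exp_smul_of_sq_eq_one P hP, h1, h2]
  simp only [mul_add, add_mul, mul_smul_comm, smul_mul_assoc, mul_one, one_mul, hc]
  module

lemma roundApply_smul {N : ℕ} (A B : Matrix (Fin 2) (Fin 2) ℂ)
    (orient : Sym2 (Fin N) → Fin N × Fin N) (angle : Sym2 (Fin N) → ℝ)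
    (L : List (Sym2 (Fin N))) (c : ℂ) (ψ : QState N) :
    roundApply A B orient angle L (c • ψ) = c • roundApply A B orient angle L ψ := by
  induction L generalizing ψ with
  | nil => rfl
  | cons e L ih =>
    simp only [roundApply, List.foldl_cons] at *
    rw [Matrix.mulVec_smul, ih]

end MeanZeroAux4
section MeanZeroAux5
open Complex

lemma roundApply_cons {N : ℕ} (A B : Matrix (Fin 2) (Fin 2) ℂ)
    (orient : Sym2 (Fin N) → Fin N × Fin N) (angle : Sym2 (Fin N) → ℝ)
    (e : Sym2 (Fin N)) (L : List (Sym2 (Fin N))) (ψ : QState N) :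
    roundApply A B orient angle (e :: L) ψ
      = roundApply A B orient angle L
          (NormedSpace.exp ((-Complex.I * ((angle e : ℂ) / 2)) •
            twoQubitOp A B (orient e).1 (orient e).2) *ᵥ ψ) := rfl

lemma roundApply_flip {N : ℕ} (A B : Matrix (Fin 2) (Fin 2) ℂ)
    (hA2 : A * A = 1) (hB2 : B * B = 1)
    (hAX : PauliX * A = -(A * PauliX)) (hBX : PauliX * B = -(B * PauliX))
    (orient : Sym2 (Fin N) → Fin N × Fin N) (j : Fin N)
    (angle angle' : Sym2 (Fin N) → ℝ) (L : List (Sym2 (Fin N)))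
    (hL : ∀ e ∈ L, (orient e).1 ≠ (orient e).2 ∧
      angle' e = if j = (orient e).1 ∨ j = (orient e).2
        then 2 * Real.pi - angle e else angle e)
    (ψ : QState N) :
    ∃ c : ℂ, (c = 1 ∨ c = -1) ∧
      roundApply A B orient angle' L (Xgate j *ᵥ ψ)
        = c • (Xgate j *ᵥ roundApply A B orient angle L ψ) := by
  induction L generalizing ψ with
  | nil => exact ⟨1, Or.inl rfl, (one_smul ℂ _).symm⟩
  | cons e L ih =>
    obtain ⟨hpq, hang⟩ := hL e List.mem_cons_self
    have hL' : ∀ e ∈ L, (orient e).1 ≠ (orient e).2 ∧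
        angle' e = if j = (orient e).1 ∨ j = (orient e).2
          then 2 * Real.pi - angle e else angle e :=
      fun e he => hL e (List.mem_cons_of_mem _ he)
    have hP : twoQubitOp A B (orient e).1 (orient e).2 * twoQubitOp A B (orient e).1 (orient e).2
        = 1 := twoQubitOp_sq A B hA2 hB2 _ _
    rw [roundApply_cons, roundApply_cons]
    by_cases hj : j = (orient e).1 ∨ j = (orient e).2
    · have hanti : Xgate j * twoQubitOp A B (orient e).1 (orient e).2
          = -(twoQubitOp A B (orient e).1 (orient e).2 * Xgate j) :=
        Xgate_anticomm_twoQubitOp j _ _ A B hAX hBX hpq hj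
      have hg := Xgate_anti_exp j _ hP hanti (angle e)
      rw [hang, if_pos hj]
      have hstep : NormedSpace.exp
            ((-Complex.I * (((2 * Real.pi - angle e : ℝ) : ℂ) / 2)) •
              twoQubitOp A B (orient e).1 (orient e).2) *ᵥ (Xgate j *ᵥ ψ)
          = (-1 : ℂ) • (Xgate j *ᵥ (NormedSpace.exp ((-Complex.I * ((angle e : ℂ) / 2)) •
              twoQubitOp A B (orient e).1 (orient e).2) *ᵥ ψ)) := by
        rw [Matrix.mulVec_mulVec, hg, Matrix.neg_mulVec, ← Matrix.mulVec_mulVec]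
        exact (neg_one_smul ℂ _).symm
      rw [hstep, roundApply_smul]
      obtain ⟨c, hc, hrec⟩ := ih hL' (NormedSpace.exp ((-Complex.I * ((angle e : ℂ) / 2)) •
        twoQubitOp A B (orient e).1 (orient e).2) *ᵥ ψ)
      refine ⟨-c, ?_, ?_⟩
      · rcases hc with h | h <;> simp [h]
      · rw [hrec, smul_smul]
        rw [show ((-1 : ℂ) * c) = -c by ring]
    · push_neg at hj
      have hcomm : Xgate j * twoQubitOp A B (orient e).1 (orient e).2
          = twoQubitOp A B (orient e).1 (orient e).2 * Xgate j :=
        Xgate_comm_twoQubitOp j _ _ A B hj.1 hj.2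
      rw [hang, if_neg (by push_neg; exact hj)]
      have hstep : NormedSpace.exp ((-Complex.I * ((angle e : ℂ) / 2)) •
              twoQubitOp A B (orient e).1 (orient e).2) *ᵥ (Xgate j *ᵥ ψ)
          = Xgate j *ᵥ (NormedSpace.exp ((-Complex.I * ((angle e : ℂ) / 2)) •
              twoQubitOp A B (orient e).1 (orient e).2) *ᵥ ψ) := by
        rw [Matrix.mulVec_mulVec, ← Xgate_comm_exp j _ hP hcomm, ← Matrix.mulVec_mulVec]
      rw [hstep]
      exact ih hL' _

end MeanZeroAux5
section MeanZeroAux6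
open Complex

lemma expval_eq_dot {N : ℕ} (ψ : QState N) (A : QOp N) :
    expval ψ A = dotProduct (star ψ) (A *ᵥ ψ) := rfl

lemma Xgate_conjTranspose {N : ℕ} (j : Fin N) : (Xgate j)ᴴ = Xgate j := by
  have hX : ∀ a b : Fin 2, star (PauliX a b) = PauliX b a := by
    intro a b; fin_cases a <;> fin_cases b <;> simp [PauliX]
  have h1 : ∀ a b : Fin 2, star ((1 : Matrix (Fin 2) (Fin 2) ℂ) a b)
      = (1 : Matrix (Fin 2) (Fin 2) ℂ) b a := by
    intro a b; fin_cases a <;> fin_cases b <;> simp [Matrix.one_apply]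
  ext x y
  simp only [Matrix.conjTranspose_apply, Xgate, pauliString, star_prod]
  refine Finset.prod_congr rfl fun k _ => ?_
  split_ifs
  · exact hX _ _
  · exact h1 _ _

lemma expval_anticomm {N : ℕ} (j : Fin N) (M : QOp N)
    (hM : Xgate j * M = -(M * Xgate j)) (ψ : QState N) :
    expval (Xgate j *ᵥ ψ) M = -expval ψ M := by
  have key : Xgate j * (M * Xgate j) = -M := by
    rw [← mul_assoc, hM, neg_mul, mul_assoc, Xgate_mul_self, mul_one]
  rw [expval_eq_dot, expval_eq_dot, Matrix.star_mulVec, Matrix.mulVec_mulVec,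
    Matrix.dotProduct_mulVec, Matrix.vecMul_vecMul, Xgate_conjTranspose, key,
    Matrix.vecMul_neg, neg_dotProduct, ← Matrix.dotProduct_mulVec]

lemma expval_smul {N : ℕ} (c : ℂ) (ψ : QState N) (M : QOp N) :
    expval (c • ψ) M = (star c * c) * expval ψ M := by
  rw [expval_eq_dot, expval_eq_dot, star_smul, Matrix.mulVec_smul,
    smul_dotProduct, dotProduct_smul, smul_eq_mul, smul_eq_mul, mul_assoc]

lemma Xgate_mulVec_const {N : ℕ} (j : Fin N) (C : ℂ) :
    Xgate j *ᵥ (fun _ => C) = (fun _ => C : QState N) := by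
  have hXrow : ∀ b : Fin 2, ∑ a, PauliX b a = 1 := by
    intro b; fin_cases b <;> simp [PauliX, Fin.sum_univ_two]
  have h1row : ∀ b : Fin 2, ∑ a, (1 : Matrix (Fin 2) (Fin 2) ℂ) b a = 1 := by
    intro b; fin_cases b <;> simp [Matrix.one_apply, Fin.sum_univ_two]
  funext x
  show ∑ y, Xgate j x y * C = C
  rw [← Finset.sum_mul]
  have : ∑ y, Xgate j x y = 1 := by
    simp only [Xgate, pauliString]
    rw [← Fintype.piFinset_univ, ← Finset.prod_univ_sum]
    rw [Finset.prod_eq_one]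
    intro k _
    split_ifs
    · exact hXrow _
    · exact h1row _
  rw [this, one_mul]

lemma Xgate_mulVec_plusN {N : ℕ} (j : Fin N) : Xgate j *ᵥ plusN N = plusN N :=
  Xgate_mulVec_const j _

end MeanZeroAux6
section MeanZeroAux7
open MeasureTheory

/-- The normalized uniform measure on `[0, 2π]`. -/
noncomputable def angMeasure : Measure ℝ :=
  (ENNReal.ofReal (2 * Real.pi))⁻¹ • volume.restrict (Set.Icc 0 (2 * Real.pi))

lemma uniformAngles_eq_pi (P : Type*) [Fintype P] :
    uniformAngles P = Measure.pi (fun _ : P => angMeasure) := rfl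

instance : IsFiniteMeasure angMeasure := by
  constructor
  rw [angMeasure, Measure.smul_apply, Measure.restrict_apply MeasurableSet.univ,
    Set.univ_inter, Real.volume_Icc]
  have h2π : (0 : ℝ) < 2 * Real.pi := by positivity
  refine ENNReal.mul_lt_top ?_ ?_
  · exact ENNReal.inv_lt_top.mpr (by simp [ENNReal.ofReal_pos, h2π, Real.pi_pos])
  · exact ENNReal.ofReal_lt_top

instance : SigmaFinite angMeasure := inferInstance

lemma refl2pi_measurePreserving :
    MeasurePreserving (fun x : ℝ => 2 * Real.pi - x) angMeasure angMeasure := by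
  refine ⟨measurable_const.sub measurable_id, ?_⟩
  rw [angMeasure, Measure.map_smul]
  congr 1
  have hvol : MeasurePreserving (fun x : ℝ => 2 * Real.pi - x)
      (volume : Measure ℝ) volume := Measure.measurePreserving_sub_left volume (2 * Real.pi)
  have hpre : (fun x : ℝ => 2 * Real.pi - x) ⁻¹' (Set.Icc 0 (2 * Real.pi))
      = Set.Icc 0 (2 * Real.pi) := by
    ext x
    simp only [Set.mem_preimage, Set.mem_Icc]
    constructor <;> intro h <;> constructor <;> linarith [h.1, h.2]
  calc Measure.map (fun x : ℝ => 2 * Real.pi - x) (volume.restrict (Set.Icc 0 (2 * Real.pi)))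
      = Measure.map (fun x : ℝ => 2 * Real.pi - x)
          (volume.restrict ((fun x : ℝ => 2 * Real.pi - x) ⁻¹' (Set.Icc 0 (2 * Real.pi)))) := by
        rw [hpre]
    _ = (Measure.map (fun x : ℝ => 2 * Real.pi - x) volume).restrict
          (Set.Icc 0 (2 * Real.pi)) :=
        (Measure.restrict_map hvol.measurable measurableSet_Icc).symm
    _ = volume.restrict (Set.Icc 0 (2 * Real.pi)) := by rw [hvol.map_eq]

lemma sigmaFlip_measurePreserving {P : Type*} [Fintype P] (cond : P → Prop)
    [DecidablePred cond] :
    MeasurePreserving (fun (θ : P → ℝ) (p : P) => if cond p then 2 * Real.pi - θ p else θ p)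
      (uniformAngles P) (uniformAngles P) := by
  rw [uniformAngles_eq_pi]
  have h : ∀ p : P, MeasurePreserving (fun x : ℝ => if cond p then 2 * Real.pi - x else x)
      angMeasure angMeasure := by
    intro p
    by_cases hc : cond p
    · simp only [if_pos hc]; exact refl2pi_measurePreserving
    · simp only [if_neg hc]; exact MeasurePreserving.id _
  exact measurePreserving_pi _ _ h

/-- The flip as a measurable equivalence. -/
noncomputable def sigmaFlipEquiv {P : Type*} (cond : P → Prop) [DecidablePred cond] :
    (P → ℝ) ≃ᵐ (P → ℝ) where
  toEquiv :=
  { toFun := fun θ p => if cond p then 2 * Real.pi - θ p else θ p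
    invFun := fun θ p => if cond p then 2 * Real.pi - θ p else θ p
    left_inv := fun θ => by
      funext p; dsimp only; by_cases h : cond p
      · rw [if_pos h, if_pos h]; ring
      · rw [if_neg h, if_neg h]
    right_inv := fun θ => by
      funext p; dsimp only; by_cases h : cond p
      · rw [if_pos h, if_pos h]; ring
      · rw [if_neg h, if_neg h] }
  measurable_toFun := by
    have hm : Measurable fun (θ : P → ℝ) (p : P) =>
        if cond p then 2 * Real.pi - θ p else θ p := by
      refine measurable_pi_lambda _ fun p => ?_
      by_cases h : cond p
      · simp only [if_pos h]; exact measurable_const.sub (measurable_pi_apply p)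
      · simp only [if_neg h]; exact measurable_pi_apply p
    exact hm
  measurable_invFun := by
    have hm : Measurable fun (θ : P → ℝ) (p : P) =>
        if cond p then 2 * Real.pi - θ p else θ p := by
      refine measurable_pi_lambda _ fun p => ?_
      by_cases h : cond p
      · simp only [if_pos h]; exact measurable_const.sub (measurable_pi_apply p)
      · simp only [if_neg h]; exact measurable_pi_apply p
    exact hm

end MeanZeroAux7
/-- **mean-zero lemma.** For a `D`-regular graph `G` on `Fin N` (`D ≥ 1`),
with arbitrary fixed orientations and per-round gate orderings of the 2-round iHVA, the mean
over uniformly random parameters of `⟨φ(θ)| Z_i Z_j |φ(θ)⟩` vanishes for every edge `(i,j)`. -/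
theorem iHVA2_edge_expectation_mean_zero {N D : ℕ} (hD : 1 ≤ D)
    (G : SimpleGraph (Fin N)) [DecidableRel G.Adj] (hreg : ∀ v, G.degree v = D)
    (orient : Sym2 (Fin N) → Fin N × Fin N)
    (horient : ∀ e ∈ G.edgeFinset, Sym2.mk (orient e).1 (orient e).2 = e)
    (L₁ L₂ : List (Sym2 (Fin N)))
    (hL₁ : L₁.Perm G.edgeFinset.toList) (hL₂ : L₂.Perm G.edgeFinset.toList)
    (i j : Fin N) (hij : G.Adj i j) :
    ∫ θ, expval (iHVA2 orient L₁ L₂ θ) (twoQubitOp PauliZ PauliZ i j)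
        ∂(uniformAngles (Fin 2 × Sym2 (Fin N))) = 0 := by
  classical
  set σe : (Fin 2 × Sym2 (Fin N) → ℝ) ≃ᵐ (Fin 2 × Sym2 (Fin N) → ℝ) :=
    sigmaFlipEquiv (fun p : Fin 2 × Sym2 (Fin N) => j ∈ p.2) with hσe
  have hedge : ∀ e ∈ G.edgeFinset, (orient e).1 ≠ (orient e).2 ∧
      ((j ∈ e) ↔ (j = (orient e).1 ∨ j = (orient e).2)) := by
    intro e he
    have hmk := horient e he
    constructor
    · intro hcontra
      have hdiag : e.IsDiag := by
        rw [← hmk]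
        exact Sym2.mk_isDiag_iff.mpr hcontra
      exact G.not_isDiag_of_mem_edgeSet (SimpleGraph.mem_edgeFinset.mp he) hdiag
    · constructor
      · intro hj
        rw [← hmk] at hj
        exact Sym2.mem_iff.mp hj
      · intro hj
        rw [← hmk]
        exact Sym2.mem_iff.mpr hj
  have hkey : ∀ θ : Fin 2 × Sym2 (Fin N) → ℝ,
      expval (iHVA2 orient L₁ L₂ (σe θ)) (twoQubitOp PauliZ PauliZ i j)
        = -expval (iHVA2 orient L₁ L₂ θ) (twoQubitOp PauliZ PauliZ i j) := by
    intro θ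
    have hcoe : ∀ p : Fin 2 × Sym2 (Fin N),
        σe θ p = if j ∈ p.2 then 2 * Real.pi - θ p else θ p := fun p => rfl
    have hang : ∀ l : Fin 2, ∀ L : List (Sym2 (Fin N)), L.Perm G.edgeFinset.toList →
        ∀ e ∈ L, (orient e).1 ≠ (orient e).2 ∧
          (fun e => σe θ (l, e)) e = if j = (orient e).1 ∨ j = (orient e).2
            then 2 * Real.pi - (fun e => θ (l, e)) e else (fun e => θ (l, e)) e := by
      intro l L hL e he
      have heF : e ∈ G.edgeFinset := Finset.mem_toList.mp (hL.mem_iff.mp he)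
      obtain ⟨hne, hmem⟩ := hedge e heF
      refine ⟨hne, ?_⟩
      dsimp only
      rw [hcoe (l, e)]
      simp only [hmem]
    obtain ⟨c₁, hc₁, h1⟩ := roundApply_flip PauliZ PauliY PauliZ_mul_self PauliY_mul_self
      PauliX_anticomm_Z PauliX_anticomm_Y orient j (fun e => θ (0, e))
      (fun e => σe θ (0, e)) L₁ (hang 0 L₁ hL₁) (plusN N)
    obtain ⟨c₂, hc₂, h2⟩ := roundApply_flip PauliY PauliZ PauliY_mul_self PauliZ_mul_self
      PauliX_anticomm_Y PauliX_anticomm_Z orient j (fun e => θ (1, e))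
      (fun e => σe θ (1, e)) L₂ (hang 1 L₂ hL₂)
      (roundApply PauliZ PauliY orient (fun e => θ (0, e)) L₁ (plusN N))
    have hstate : iHVA2 orient L₁ L₂ (σe θ)
        = (c₁ * c₂) • (Xgate j *ᵥ iHVA2 orient L₁ L₂ θ) := by
      show roundApply PauliY PauliZ orient (fun e => σe θ (1, e)) L₂
          (roundApply PauliZ PauliY orient (fun e => σe θ (0, e)) L₁ (plusN N))
        = (c₁ * c₂) • (Xgate j *ᵥ roundApply PauliY PauliZ orient (fun e => θ (1, e)) L₂
          (roundApply PauliZ PauliY orient (fun e => θ (0, e)) L₁ (plusN N)))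
      conv_lhs => rw [← Xgate_mulVec_plusN j]
      rw [h1, roundApply_smul, h2, smul_smul]
    rw [hstate, expval_smul, expval_anticomm j _
      (Xgate_anticomm_twoQubitOp j i j PauliZ PauliZ PauliX_anticomm_Z PauliX_anticomm_Z
        hij.ne (Or.inr rfl)) _]
    have hone : star (c₁ * c₂) * (c₁ * c₂) = 1 := by
      rcases hc₁ with h | h <;> rcases hc₂ with h' | h' <;> simp [h, h']
    rw [hone, one_mul]
  have hmp : MeasureTheory.MeasurePreserving (⇑σe) (uniformAngles (Fin 2 × Sym2 (Fin N)))
      (uniformAngles (Fin 2 × Sym2 (Fin N))) :=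
    sigmaFlip_measurePreserving (fun p : Fin 2 × Sym2 (Fin N) => j ∈ p.2)
  have hcomp := MeasureTheory.MeasurePreserving.integral_comp hmp σe.measurableEmbedding
    (fun θ => expval (iHVA2 orient L₁ L₂ θ) (twoQubitOp PauliZ PauliZ i j))
  have hneg : ∫ θ, expval (iHVA2 orient L₁ L₂ θ) (twoQubitOp PauliZ PauliZ i j)
        ∂(uniformAngles (Fin 2 × Sym2 (Fin N)))
      = -∫ θ, expval (iHVA2 orient L₁ L₂ θ) (twoQubitOp PauliZ PauliZ i j)
        ∂(uniformAngles (Fin 2 × Sym2 (Fin N))) := by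
    conv_lhs => rw [← hcomp]
    rw [show (fun θ => expval (iHVA2 orient L₁ L₂ (σe θ)) (twoQubitOp PauliZ PauliZ i j))
        = fun θ => -expval (iHVA2 orient L₁ L₂ θ) (twoQubitOp PauliZ PauliZ i j)
      from funext hkey]
    exact MeasureTheory.integral_neg _
  linear_combination hneg / 2
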